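/- Let K be a finite-dimensional real division algebra, n ≥ 1, and h_K = K^n × K^n × K the 2-step nilpotent real Lie algebra with bracket [(v₁,w₁,z₁),(v₂,w₂,z₂)] = (0, 0, Σ_{k=1}^n (v_{1k}·w_{2k} − v_{2k}·w_{1k})), with z := {0} × {0} × K. Then for every ℝ-linear functional ξ on h_K that does not vanish identically on z, the isotropy subalgebra h_K(ξ) := {x ∈ h_K | ∀ y ∈ h_K, ξ([x,y]) = 0} equals z; consequently dim h_K − dim h_K(ξ) = 2n·dim_ℝ K. -/

import Mathlib

/-- The underlying vector space `K^n × K^n × K` of the Heisenberg-like Lie algebra attached to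
a bilinear multiplication `m` on `K`. -/
def HK (K : Type*) [AddCommGroup K] [Module ℝ K] (m : K →ₗ[ℝ] K →ₗ[ℝ] K) (n : ℕ) :
    Type _ :=
  (Fin n → K) × (Fin n → K) × K

section Instances

variable {K : Type*} [AddCommGroup K] [Module ℝ K] (m : K →ₗ[ℝ] K →ₗ[ℝ] K) (n : ℕ)

instance : AddCommGroup (HK K m n) :=
  inferInstanceAs (AddCommGroup ((Fin n → K) × (Fin n → K) × K))

instance : Module ℝ (HK K m n) :=
  inferInstanceAs (Module ℝ ((Fin n → K) × (Fin n → K) × K))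

/-- The third-coordinate (central) embedding `K → HK K m n`. -/
def HK.z (c : K) : HK K m n := ((0 : Fin n → K), (0 : Fin n → K), c)

lemma HK.z_add (c d : K) : (HK.z m n (c + d)) = HK.z m n c + HK.z m n d := by
  show ((0 : Fin n → K), (0 : Fin n → K), c + d)
    = ((0 : Fin n → K), (0 : Fin n → K), c) + ((0 : Fin n → K), (0 : Fin n → K), d)
  simp [Prod.mk_add_mk]

/-- The scalar part of the bracket on `HK K m n`. -/
def HK.br (x y : HK K m n) : K :=
  ∑ k, (m (x.1 k) (y.2.1 k) - m (y.1 k) (x.2.1 k))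

lemma HK.br_add_left (x y z : HK K m n) :
    HK.br m n (x + y) z = HK.br m n x z + HK.br m n y z := by
  unfold HK.br
  rw [← Finset.sum_add_distrib]
  refine Finset.sum_congr rfl fun k _ => ?_
  show m ((x.1 + y.1) k) (z.2.1 k) - m (z.1 k) ((x.2.1 + y.2.1) k) = _
  simp only [Pi.add_apply, map_add, LinearMap.add_apply]
  abel

lemma HK.br_add_right (x y z : HK K m n) :
    HK.br m n x (y + z) = HK.br m n x y + HK.br m n x z := by
  unfold HK.br
  rw [← Finset.sum_add_distrib]
  refine Finset.sum_congr rfl fun k _ => ?_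
  show m (x.1 k) ((y.2.1 + z.2.1) k) - m ((y.1 + z.1) k) (x.2.1 k) = _
  simp only [Pi.add_apply, map_add, LinearMap.add_apply]
  abel

lemma HK.br_z_left (c : K) (y : HK K m n) : HK.br m n (HK.z m n c) y = 0 := by
  unfold HK.br HK.z
  simp

lemma HK.br_z_right (c : K) (y : HK K m n) : HK.br m n y (HK.z m n c) = 0 := by
  unfold HK.br HK.z
  simp

instance : LieRing (HK K m n) where
  bracket x y := HK.z m n (HK.br m n x y)
  add_lie x y z := by
    show HK.z m n (HK.br m n (x + y) z) = HK.z m n (HK.br m n x z) + HK.z m n (HK.br m n y z)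
    rw [← HK.z_add, ← HK.br_add_left]
  lie_add x y z := by
    show HK.z m n (HK.br m n x (y + z)) = HK.z m n (HK.br m n x y) + HK.z m n (HK.br m n x z)
    rw [← HK.z_add, ← HK.br_add_right]
  lie_self x := by
    show HK.z m n (HK.br m n x x) = 0
    have : HK.br m n x x = 0 := by unfold HK.br; simp
    rw [this]; rfl
  leibniz_lie x y z := by
    show HK.z m n (HK.br m n x (HK.z m n (HK.br m n y z))) =
      HK.z m n (HK.br m n (HK.z m n (HK.br m n x y)) z) +
        HK.z m n (HK.br m n y (HK.z m n (HK.br m n x z)))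
    rw [HK.br_z_right, HK.br_z_left, HK.br_z_right, ← HK.z_add, add_zero]

instance : LieAlgebra ℝ (HK K m n) where
  lie_smul c x y := by
    show HK.z m n (HK.br m n x (c • y)) = c • HK.z m n (HK.br m n x y)
    have h1 : HK.br m n x (c • y) = c • HK.br m n x y := by
      unfold HK.br
      rw [Finset.smul_sum]
      refine Finset.sum_congr rfl fun k _ => ?_
      show m (x.1 k) ((c • y.2.1) k) - m ((c • y.1) k) (x.2.1 k) = _
      simp only [Pi.smul_apply, map_smul, LinearMap.smul_apply, smul_sub]
    rw [h1]
    show ((0 : Fin n → K), (0 : Fin n → K), c • HK.br m n x y)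
      = c • ((0 : Fin n → K), (0 : Fin n → K), HK.br m n x y)
    simp [Prod.smul_mk]

/-- The subspace `z = {0} × {0} × K` of `HK K m n`. -/
def HK.centre : Submodule ℝ (HK K m n) where
  carrier := {x | ∃ c : K, x = HK.z m n c}
  add_mem' := by
    rintro x y ⟨c, rfl⟩ ⟨d, rfl⟩
    exact ⟨c + d, (HK.z_add m n c d).symm⟩
  zero_mem' := ⟨0, rfl⟩
  smul_mem' := by
    rintro r x ⟨c, rfl⟩
    refine ⟨r • c, ?_⟩
    show r • ((0 : Fin n → K), (0 : Fin n → K), c) = ((0 : Fin n → K), (0 : Fin n → K), r • c)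
    simp [Prod.smul_mk]


/-- The coadjoint isotropy subalgebra `{x | ∀ y, ξ [x,y] = 0}` of a linear functional `ξ` on a
Lie algebra, as a submodule. -/
def coadjointIsotropy {R L : Type*} [CommRing R] [LieRing L] [LieAlgebra R L]
    (ξ : Module.Dual R L) : Submodule R L where
  carrier := {x | ∀ y : L, ξ ⁅x, y⁆ = 0}
  add_mem' := by
    intro x y hx hy z
    rw [add_lie, map_add, hx z, hy z, add_zero]
  zero_mem' := by
    intro z
    rw [zero_lie, map_zero]
  smul_mem' := by
    intro c x hx z
    rw [smul_lie, map_smul, hx z, smul_zero]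



end Instances

section Aux

variable {K : Type*} [AddCommGroup K] [Module ℝ K] (m : K →ₗ[ℝ] K →ₗ[ℝ] K) (n : ℕ)

/-- `HK.z` as a linear map. -/
def HK.zL : K →ₗ[ℝ] HK K m n where
  toFun := HK.z m n
  map_add' := HK.z_add m n
  map_smul' := by
    intro r c
    show ((0 : Fin n → K), (0 : Fin n → K), r • c)
      = r • ((0 : Fin n → K), (0 : Fin n → K), c)
    simp [Prod.smul_mk]

lemma HK.zL_inj : Function.Injective (HK.zL m n) := by
  intro a b h
  have := congrArg (fun x : HK K m n => x.2.2) h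
  exact this

lemma HK.centre_eq_range : HK.centre m n = LinearMap.range (HK.zL m n) := by
  ext x
  constructor
  · rintro ⟨c, rfl⟩; exact ⟨c, rfl⟩
  · rintro ⟨c, rfl⟩; exact ⟨c, rfl⟩

lemma HK.bracket_eq (x y : HK K m n) : ⁅x, y⁆ = HK.z m n (HK.br m n x y) := rfl

end Aux

/-- Lemma 4.10(ii): for a finite-dimensional real division algebra `K` and `n ≥ 1`, every
linear functional `ξ` on `h_K = K^n × K^n × K` which does not vanish identically on the centre
`z = {0} × {0} × K` has coadjoint isotropy subalgebra `h_K(ξ)` equal to `z`; consequently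
`dim h_K − dim h_K(ξ) = 2n · dim_ℝ K`. -/
theorem HK_isotropy_eq_centre
    (K : Type*) [AddCommGroup K] [Module ℝ K] [FiniteDimensional ℝ K] [Nontrivial K]
    (m : K →ₗ[ℝ] K →ₗ[ℝ] K)
    (hdiv : ∀ a : K, a ≠ 0 →
      Function.Injective (fun x => m a x) ∧ Function.Injective (fun x => m x a))
    (n : ℕ) (hn : 1 ≤ n)
    (ξ : Module.Dual ℝ (HK K m n)) (hξ : ∃ c : K, ξ (HK.z m n c) ≠ 0) :
    coadjointIsotropy ξ = HK.centre m n ∧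
    Module.finrank ℝ (HK K m n) - Module.finrank ℝ (coadjointIsotropy ξ)
      = 2 * n * Module.finrank ℝ K := by
  obtain ⟨c₀, hc₀⟩ := hξ
  -- surjectivity of multiplications
  have surjL : ∀ a : K, a ≠ 0 → Function.Surjective (m a) := by
    intro a ha
    exact (LinearMap.injective_iff_surjective (f := m a)).mp (hdiv a ha).1
  have surjR : ∀ a : K, a ≠ 0 → Function.Surjective (m.flip a) := by
    intro a ha
    exact (LinearMap.injective_iff_surjective (f := m.flip a)).mp (hdiv a ha).2
  have heq : coadjointIsotropy ξ = HK.centre m n := by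
    ext x
    constructor
    · intro hx
      obtain ⟨v, w, z⟩ := x
      have hv : v = 0 := by
        funext k
        by_contra hvk
        obtain ⟨c, hc⟩ := surjL (v k) hvk c₀
        have := hx ((0 : Fin n → K), Pi.single k c, (0 : K))
        change ξ (HK.z m n (HK.br m n (v, w, z) ((0 : Fin n → K), Pi.single k c, (0 : K)))) = 0 at this
        have hbr : HK.br m n (v, w, z) ((0 : Fin n → K), Pi.single k c, (0 : K)) = c₀ := by
          unfold HK.br
          simp only [Pi.zero_apply, map_zero, LinearMap.zero_apply, sub_zero]
          rw [Finset.sum_eq_single k]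
          · simpa [Pi.single_eq_same] using hc
          · intro j _ hj; simp [Pi.single_eq_of_ne hj]
          · intro h; exact absurd (Finset.mem_univ k) h
        rw [hbr] at this
        exact hc₀ this
      have hw : w = 0 := by
        funext k
        by_contra hwk
        obtain ⟨c, hc⟩ := surjR (w k) hwk (-c₀)
        have := hx (Pi.single k c, (0 : Fin n → K), (0 : K))
        change ξ (HK.z m n (HK.br m n (v, w, z) (Pi.single k c, (0 : Fin n → K), (0 : K)))) = 0 at this
        have hbr : HK.br m n (v, w, z) (Pi.single k c, (0 : Fin n → K), (0 : K)) = c₀ := by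
          unfold HK.br
          simp only [Pi.zero_apply, map_zero, zero_sub]
          rw [Finset.sum_eq_single k]
          · have : m c (w k) = -c₀ := hc
            simp [this]
          · intro j _ hj; simp [Pi.single_eq_of_ne hj]
          · intro h; exact absurd (Finset.mem_univ k) h
        rw [hbr] at this
        exact hc₀ this
      exact ⟨z, by rw [hv, hw]; rfl⟩
    · rintro ⟨c, rfl⟩
      intro y
      rw [HK.bracket_eq, HK.br_z_left]
      show ξ ((0 : Fin n → K), (0 : Fin n → K), (0 : K)) = 0
      have : ((0 : Fin n → K), (0 : Fin n → K), (0 : K)) = (0 : HK K m n) := rfl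
      rw [this, map_zero]
  refine ⟨heq, ?_⟩
  have hcent : Module.finrank ℝ (HK.centre m n : Submodule ℝ (HK K m n)) = Module.finrank ℝ K := by
    rw [HK.centre_eq_range]
    exact LinearMap.finrank_range_of_inj (HK.zL_inj m n)
  have hpi : Module.finrank ℝ (Fin n → K) = n * Module.finrank ℝ K := by
    rw [Module.finrank_pi_fintype]
    simp [Finset.sum_const, Fintype.card_fin, mul_comm]
  have htot : Module.finrank ℝ (HK K m n)
      = n * Module.finrank ℝ K + (n * Module.finrank ℝ K + Module.finrank ℝ K) := by
    show Module.finrank ℝ ((Fin n → K) × (Fin n → K) × K) = _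
    rw [Module.finrank_prod, Module.finrank_prod, hpi]
  rw [heq, hcent, htot]
  ring_nf
  omega
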